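/- Let U be a real Hilbert space, W ⊆ U a closed subspace with orthogonal projection P_W, and V ⊆ U a finite-dimensional subspace. Then the following are equivalent: (i) for every w ∈ W there exists a unique v* ∈ V such that ‖w − P_W v*‖ ≤ ‖w − P_W v‖ for all v ∈ V; (ii) V ∩ W^⊥ = {0}. -/

import Mathlib

/-- Well-posedness criterion for the PBDW variational problem: the least-squares
background term exists and is unique for every observation iff `V ∩ W^⊥ = {0}`. -/
theorem stmt_14
    {U : Type*} [NormedAddCommGroup U] [InnerProductSpace ℝ U] [CompleteSpace U]
    (W : Submodule ℝ U) [CompleteSpace W]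
    (V : Submodule ℝ U) [FiniteDimensional ℝ V] :
    (∀ w : W, ∃! vstar : U, vstar ∈ V ∧
      ∀ v ∈ V, ‖(w : U) - (Submodule.orthogonalProjection W vstar : U)‖ ≤
        ‖(w : U) - (Submodule.orthogonalProjection W v : U)‖) ↔
    V ⊓ Wᗮ = ⊥ := by
  constructor
  · intro h
    rw [Submodule.eq_bot_iff]
    rintro x ⟨hxV, hxW⟩
    obtain ⟨vs, _, huniq⟩ := h 0
    have hPx : Submodule.orthogonalProjection W x = 0 :=
      Submodule.orthogonalProjectionOnto_apply_of_mem_orthogonal hxW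
    have h0 : (0 : U) ∈ V ∧ ∀ v ∈ V, ‖((0 : W) : U) - (Submodule.orthogonalProjection W (0:U) : U)‖ ≤
        ‖((0 : W) : U) - (Submodule.orthogonalProjection W v : U)‖ := by
      refine ⟨V.zero_mem, fun v hv => ?_⟩
      simp
    have hx : x ∈ V ∧ ∀ v ∈ V, ‖((0 : W) : U) - (Submodule.orthogonalProjection W x : U)‖ ≤
        ‖((0 : W) : U) - (Submodule.orthogonalProjection W v : U)‖ := by
      refine ⟨hxV, fun v hv => ?_⟩
      simp [hPx]
    have e1 := huniq 0 h0
    have e2 := huniq x hx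
    rw [e2, ← e1]
  · intro hVW w
    set Q : U →ₗ[ℝ] U := W.subtype.comp (Submodule.orthogonalProjection W : U →L[ℝ] W).toLinearMap with hQ
    have hQapp : ∀ u : U, Q u = (Submodule.orthogonalProjection W u : U) := fun u => rfl
    set S : Submodule ℝ U := V.map Q with hS
    haveI : FiniteDimensional ℝ S := Module.Finite.map V Q
    have hkey : ∀ u ∈ V, Q u = 0 → u = 0 := by
      intro u huV hu0
      have huW : u ∈ Wᗮ := by
        have : u - (Submodule.orthogonalProjection W u : U) ∈ Wᗮ :=
          Submodule.sub_starProjection_mem_orthogonal (K := W) u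
        rwa [← hQapp, hu0, sub_zero] at this
      have : u ∈ V ⊓ Wᗮ := ⟨huV, huW⟩
      rwa [hVW, Submodule.mem_bot] at this
    -- the minimizer
    obtain ⟨v0, hv0V, hv0⟩ : (Submodule.orthogonalProjection S (w : U) : U) ∈ S :=
      Submodule.coe_mem _
    have hmin : ∀ v ∈ V, ‖(w : U) - (Submodule.orthogonalProjection W v0 : U)‖ ≤
        ‖(w : U) - (Submodule.orthogonalProjection W v : U)‖ := by
      intro v hv
      rw [← hQapp, ← hQapp, hv0]
      rw [show ‖(w : U) - (Submodule.orthogonalProjection S (w : U) : U)‖ = ⨅ x : S, ‖(w : U) - x‖ from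
        Submodule.starProjection_minimal _]
      exact ciInf_le ⟨0, fun r ⟨z, hz⟩ => hz ▸ norm_nonneg _⟩
        (⟨Q v, Submodule.mem_map_of_mem hv⟩ : S)
    refine ⟨v0, ⟨hv0V, hmin⟩, ?_⟩
    rintro v' ⟨hv'V, hmin'⟩
    -- Q v' also achieves the minimum, hence equals the projection onto S
    have hQv'S : Q v' ∈ S := Submodule.mem_map_of_mem hv'V
    have heq : ‖(w : U) - Q v'‖ = ⨅ z : S, ‖(w : U) - z‖ := by
      apply le_antisymm
      · apply le_ciInf
        rintro ⟨z, hzmem⟩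
        obtain ⟨v, hvV, rfl⟩ := hzmem
        exact hmin' v hvV
      · calc (⨅ z : S, ‖(w : U) - (z : U)‖)
            ≤ ‖(w : U) - (Q v' : U)‖ :=
              ciInf_le ⟨0, fun r ⟨z, hz⟩ => hz ▸ norm_nonneg _⟩ (⟨Q v', hQv'S⟩ : S)
          _ = ‖(w : U) - Q v'‖ := rfl
    have hproj : (Submodule.orthogonalProjection S (w : U) : U) = Q v' :=
      Submodule.eq_starProjection_of_mem_of_inner_eq_zero hQv'S
        ((Submodule.norm_eq_iInf_iff_inner_eq_zero S hQv'S).1 heq)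
    have : Q (v' - v0) = 0 := by
      rw [map_sub, hv0, hproj, sub_self]
    have := hkey (v' - v0) (V.sub_mem hv'V hv0V) this
    exact sub_eq_zero.mp this
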